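/- (Liouville property via coupling) Let G=(V,q) be a reversible stochastically complete graph and let G̃=(V×V,q̃) be a coupling graph of G with heat semigroup P̃_t. Suppose P̃_t 1_W → 0 pointwise as t → ∞, where W := V×V ∖ {(x,x) : x∈V}. Then every bounded function f:V→ℝ with Δf = 0 is constant. -/

import Mathlib

open scoped BigOperators Classical

namespace OllivierGraph

variable {V : Type*}

/-- A graph structure on `V`: non-negative edge weights with finitely many
neighbours for every vertex. -/
def IsGraph (q : V → V → ℝ) : Prop :=
  (∀ x y, 0 ≤ q x y) ∧ ∀ x, {y | 0 < q x y}.Finite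

/-- `m` is an invariant measure for `q`, i.e. `q` is reversible w.r.t. `m`. -/
def IsInvariantMeasure (q : V → V → ℝ) (m : V → ℝ) : Prop :=
  (∀ x, 0 < m x) ∧ ∀ x y, q x y * m x = q y x * m y

/-- Reversibility (undirectedness) of the graph. -/
def IsReversible (q : V → V → ℝ) : Prop :=
  ∃ m : V → ℝ, IsInvariantMeasure q m

/-- The graph Laplacian `Δ f (x) = Σ_y q(x,y)(f(y) - f(x))`. -/
noncomputable def lap (q : V → V → ℝ) (f : V → ℝ) (x : V) : ℝ :=
  ∑' y, q x y * (f y - f x)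

/-- The set of lengths of walks from `x` to `y`. -/
def walkLens (q : V → V → ℝ) (x y : V) : Set ℕ :=
  {n | ∃ p : ℕ → V, p 0 = x ∧ p n = y ∧ ∀ i < n, 0 < q (p i) (p (i + 1))}

/-- The combinatorial distance. -/
noncomputable def gdist (q : V → V → ℝ) (x y : V) : ℕ :=
  sInf (walkLens q x y)

/-- Connectedness: every two vertices are joined by some walk. -/
def GConnected (q : V → V → ℝ) : Prop :=
  ∀ x y : V, (walkLens q x y).Nonempty

/-- `q_min`: the infimum of the positive edge weights. -/
noncomputable def qmin (q : V → V → ℝ) : ℝ :=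
  sInf {c : ℝ | 0 < c ∧ ∃ x y, q x y = c}

/-- Boundedness of a real valued function. -/
def IsBoundedFun (f : V → ℝ) : Prop := ∃ C, ∀ x, |f x| ≤ C

/-- Supremum norm. -/
noncomputable def supNorm (f : V → ℝ) : ℝ := ⨆ x, |f x|

/-- `∇_{xy} f = (f(x) - f(y)) / d(x,y)`. -/
noncomputable def gradxy (q : V → V → ℝ) (f : V → ℝ) (x y : V) : ℝ :=
  (f x - f y) / (gdist q x y : ℝ)

/-- `‖∇ f‖_∞ = sup_{x ≠ y} |∇_{xy} f|`. -/
noncomputable def gradNorm (q : V → V → ℝ) (f : V → ℝ) : ℝ :=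
  ⨆ p : {p : V × V // p.1 ≠ p.2}, |gradxy q f p.1.1 p.1.2|

/-- Ollivier curvature `κ(x,y)`. -/
noncomputable def kappa (q : V → V → ℝ) (x y : V) : ℝ :=
  sInf {c | ∃ f : V → ℝ, gradxy q f y x = 1 ∧ gradNorm q f = 1 ∧
    c = gradxy q (lap q f) x y}

/-- Non-negative Ollivier curvature. -/
def NonnegOllivier (q : V → V → ℝ) : Prop :=
  ∀ x y : V, x ≠ y → 0 ≤ kappa q x y

/-- Transport plan from `x0` to `y0`. -/
def IsTransportPlan (q : V → V → ℝ) (x0 y0 : V) (ρ : V → V → ℝ) : Prop :=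
  (∀ x y, 0 ≤ ρ x y) ∧
  (∀ x, x ≠ x0 → ∑' y, ρ x y = q x0 x) ∧
  (∀ y, y ≠ y0 → ∑' x, ρ x y = q y0 y)

/-- The cost of a transport plan. -/
noncomputable def cost (q : V → V → ℝ) (x0 y0 : V) (ρ : V → V → ℝ) : ℝ :=
  ∑' p : V × V, ρ p.1 p.2 * ((gdist q x0 y0 : ℝ) - (gdist q p.1 p.2 : ℝ))

/-- `μ_ρ(k)`: the mass transported over distance `d(x0,y0) + k`. -/
noncomputable def muRho (q : V → V → ℝ) (x0 y0 : V) (ρ : V → V → ℝ) (k : ℤ) : ℝ :=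
  ∑' p : V × V,
    if (gdist q p.1 p.2 : ℤ) - (gdist q x0 y0 : ℤ) = k then ρ p.1 p.2 else 0

/-- Optimality of a transport plan: it maximizes the cost. -/
def IsOptimalPlan (q : V → V → ℝ) (x0 y0 : V) (ρ : V → V → ℝ) : Prop :=
  IsTransportPlan q x0 y0 ρ ∧
  ∀ σ : V → V → ℝ, IsTransportPlan q x0 y0 σ → cost q x0 y0 σ ≤ cost q x0 y0 ρ

/-- A coupling graph of `q`: a graph on `V × V` whose Laplacian tensorizes. -/
def IsCouplingGraph (q : V → V → ℝ) (qt : V × V → V × V → ℝ) : Prop :=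
  IsGraph qt ∧
  ∀ f : V → ℝ,
    (∀ p : V × V, lap qt (fun r => f r.1) p = lap q f p.1) ∧
    (∀ p : V × V, lap qt (fun r => f r.2) p = lap q f p.2)

/-- A perfect coupling graph. -/
def IsPerfectCoupling (q : V → V → ℝ) (qt : V × V → V × V → ℝ) : Prop :=
  IsCouplingGraph q qt ∧
  ∀ x0 y0 : V,
    IsOptimalPlan q x0 y0 (fun x y => qt (x0, y0) (x, y)) ∧
    (∀ k : ℤ, 1 < |k| → muRho q x0 y0 (fun x y => qt (x0, y0) (x, y)) k = 0) ∧
    (x0 ≠ y0 → 2 * qmin q ≤ muRho q x0 y0 (fun x y => qt (x0, y0) (x, y)) (-1))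

/-- Truncated Laplacian `Δ_S`, corresponding to the rates `q_S(x,y) = q(x,y) 1_S(x)`. -/
noncomputable def lapS (q : V → V → ℝ) (S : Finset V) (f : V → ℝ) (x : V) : ℝ :=
  if x ∈ S then lap q f x else 0

/-- Truncated heat semigroup `P_t^S f = Σ_k t^k Δ_S^k (f · 1_S) / k!`. -/
noncomputable def heatS (q : V → V → ℝ) (S : Finset V) (t : ℝ) (f : V → ℝ) (x : V) : ℝ :=
  ∑' k : ℕ, t ^ k / (Nat.factorial k : ℝ) *
    ((lapS q S)^[k] (fun v => if v ∈ S then f v else 0)) x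

/-- Heat semigroup applied to non-negative functions: supremum of the truncations. -/
noncomputable def heatPos (q : V → V → ℝ) (t : ℝ) (f : V → ℝ) (x : V) : ℝ :=
  ⨆ S : Finset V, heatS q S t f x

/-- Heat semigroup `P_t f := P_t f_+ - P_t f_-`. -/
noncomputable def heat (q : V → V → ℝ) (t : ℝ) (f : V → ℝ) (x : V) : ℝ :=
  heatPos q t (fun v => max (f v) 0) x - heatPos q t (fun v => max (-f v) 0) x

/-- Stochastic completeness: `P_t 1 = 1`. -/
def StochasticallyComplete (q : V → V → ℝ) : Prop :=
  ∀ t : ℝ, 0 ≤ t → ∀ x, heat q t (fun _ => 1) x = 1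

/-- The birth-death chain on `ℕ` with rates `2c` and absorbing state `0`. -/
noncomputable def qBD (c : ℝ) : ℕ → ℕ → ℝ :=
  fun x y => if 0 < x ∧ (x = y + 1 ∨ y = x + 1) then 2 * c else 0

/-- `φ_t(n) = P_t^{ℕ₀} 1_{ℕ₊} (n)`. -/
noncomputable def phiBD (c : ℝ) (t : ℝ) (n : ℕ) : ℝ :=
  heat (qBD c) t (fun k => if 0 < k then 1 else 0) n

/-- `ℓ¹` norm with respect to the measure `m`. -/
noncomputable def l1Norm (m : V → ℝ) (f : V → ℝ) : ℝ := ∑' x, m x * |f x|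

/-- Membership in `ℓ¹(V, m)`. -/
def MemL1 (m : V → ℝ) (f : V → ℝ) : Prop := Summable fun x => m x * |f x|

/-- The `ℓ¹`-Wasserstein distance (via Kantorovich duality). -/
noncomputable def W1 (q : V → V → ℝ) (m : V → ℝ) (μ ν : V → ℝ) : ℝ :=
  sSup {c | ∃ g : V → ℝ, gradNorm q g ≤ 1 ∧ c = ∑' x, m x * (μ x - ν x) * g x}

/-- The Laplacian as a matrix (finite graphs). -/
noncomputable def lapMat [Fintype V] (q : V → V → ℝ) [DecidableEq V] : Matrix V V ℝ :=
  Matrix.of fun x y => q x y - if x = y then ∑ z, q x z else 0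

/-- The heat semigroup `e^{tΔ}` of a finite graph. -/
noncomputable def heatFin [Fintype V] [DecidableEq V] (q : V → V → ℝ) (t : ℝ)
    (f : V → ℝ) : V → ℝ :=
  (NormedSpace.exp (t • lapMat q)).mulVec f

/-- `λ` is an eigenvalue of `-Δ`. -/
def IsLapEigenvalue (q : V → V → ℝ) (lam : ℝ) : Prop :=
  ∃ f : V → ℝ, f ≠ 0 ∧ ∀ x, lap q f x = -lam * f x

/-- Boundary measure `|∂A|` of a set of vertices. -/
noncomputable def boundaryMeasure [Fintype V] [DecidableEq V] (q : V → V → ℝ)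
    (m : V → ℝ) (A : Finset V) : ℝ :=
  ∑ x ∈ A, ∑ y ∈ Aᶜ, m x * q x y

/-- The Cheeger constant of a finite graph. -/
noncomputable def cheeger [Fintype V] [DecidableEq V] (q : V → V → ℝ) (m : V → ℝ) : ℝ :=
  sInf {c | ∃ A : Finset V, 0 < (∑ x ∈ A, m x) ∧ 2 * (∑ x ∈ A, m x) ≤ ∑ x, m x ∧
    c = boundaryMeasure q m A / ∑ x ∈ A, m x}

/-- The diameter of a graph. -/
noncomputable def gdiam (q : V → V → ℝ) : ℝ :=
  ⨆ p : V × V, (gdist q p.1 p.2 : ℝ)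

section LiouvilleAux

open NormedSpace

variable {W : Type*}

/-- Neighbour finset of a vertex. -/
noncomputable def nbr (Q : W → W → ℝ) (hQ : IsGraph Q) (x : W) : Finset W :=
  (hQ.2 x).toFinset

lemma q_eq_zero_of_not_mem_nbr (Q : W → W → ℝ) (hQ : IsGraph Q) {x y : W}
    (hy : y ∉ nbr Q hQ x) : Q x y = 0 := by
  have h1 : ¬ 0 < Q x y := by simpa [nbr] using hy
  exact le_antisymm (not_lt.1 h1) (hQ.1 x y)

lemma lap_eq_sum (Q : W → W → ℝ) (hQ : IsGraph Q) (u : W → ℝ) (x : W) :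
    lap Q u x = ∑ y ∈ nbr Q hQ x, Q x y * (u y - u x) := by
  refine tsum_eq_sum ?_
  intro y hy
  rw [q_eq_zero_of_not_mem_nbr Q hQ hy, zero_mul]

lemma lap_add (Q : W → W → ℝ) (hQ : IsGraph Q) (u v : W → ℝ) (x : W) :
    lap Q (fun z => u z + v z) x = lap Q u x + lap Q v x := by
  simp only [lap_eq_sum Q hQ, ← Finset.sum_add_distrib]
  exact Finset.sum_congr rfl fun y _ => by ring

lemma lap_sub (Q : W → W → ℝ) (hQ : IsGraph Q) (u v : W → ℝ) (x : W) :
    lap Q (fun z => u z - v z) x = lap Q u x - lap Q v x := by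
  simp only [lap_eq_sum Q hQ, ← Finset.sum_sub_distrib]
  exact Finset.sum_congr rfl fun y _ => by ring

lemma lap_const (Q : W → W → ℝ) (c : ℝ) (x : W) : lap Q (fun _ => c) x = 0 := by
  simp [lap]

lemma lapS_of_not_mem (Q : W → W → ℝ) {S : Finset W} (u : W → ℝ) {x : W} (hx : x ∉ S) :
    lapS Q S u x = 0 := if_neg hx

lemma lapS_zero (Q : W → W → ℝ) (S : Finset W) :
    lapS Q S (fun _ => (0 : ℝ)) = fun _ => 0 := by
  funext x
  simp [lapS, lap]

/-- The series `serS` : truncated heat semigroup applied to a general function. -/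
noncomputable def serS (Q : W → W → ℝ) (S : Finset W) (t : ℝ) (u : W → ℝ) (x : W) : ℝ :=
  ∑' k : ℕ, t ^ k / (Nat.factorial k : ℝ) * ((lapS Q S)^[k] u) x

lemma heatS_eq_serS (Q : W → W → ℝ) (S : Finset W) (t : ℝ) (f : W → ℝ) (x : W) :
    heatS Q S t f x = serS Q S t (fun v => if v ∈ S then f v else 0) x := rfl

lemma serS_of_lapS_eq_zero {Q : W → W → ℝ} {S : Finset W} {u : W → ℝ}
    (h : lapS Q S u = fun _ => 0) (t : ℝ) (x : W) : serS Q S t u x = u x := by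
  refine (tsum_eq_single 0 ?_).trans (by simp)
  intro k hk
  obtain ⟨m, rfl⟩ := Nat.exists_eq_succ_of_ne_zero hk
  rw [Function.iterate_succ_apply, h, Function.iterate_fixed (lapS_zero Q S)]
  simp

lemma serS_const (Q : W → W → ℝ) (S : Finset W) (t : ℝ) (c : ℝ) (x : W) :
    serS Q S t (fun _ => c) x = c := by
  refine serS_of_lapS_eq_zero ?_ t x
  funext z
  simp [lapS, lap_const]

lemma serS_harm (Q : W → W → ℝ) (S : Finset W) (t : ℝ) {u : W → ℝ}
    (hu : ∀ z, lap Q u z = 0) (x : W) : serS Q S t u x = u x := by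
  refine serS_of_lapS_eq_zero ?_ t x
  funext z
  simp [lapS, hu z]

lemma serS_of_not_mem (Q : W → W → ℝ) (S : Finset W) (t : ℝ) (u : W → ℝ) {x : W}
    (hx : x ∉ S) : serS Q S t u x = u x := by
  refine (tsum_eq_single 0 ?_).trans (by simp)
  intro k hk
  obtain ⟨m, rfl⟩ := Nat.exists_eq_succ_of_ne_zero hk
  rw [Function.iterate_succ_apply', lapS_of_not_mem Q _ hx, mul_zero]

lemma serS_zero (Q : W → W → ℝ) (S : Finset W) (u : W → ℝ) (x : W) :
    serS Q S 0 u x = u x := by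
  refine (tsum_eq_single 0 ?_).trans (by simp)
  intro k hk
  simp [zero_pow hk]

end LiouvilleAux
section MatrixAux

open NormedSpace

/-- Entry evaluation of a matrix, as a continuous linear map. -/
noncomputable def entryCLM {n : Type*} [Fintype n] (i j : n) :
    Matrix n n ℝ →L[ℝ] ℝ :=
  ⟨{ toFun := fun A => A i j
     map_add' := fun _ _ => rfl
     map_smul' := fun _ _ => rfl },
   (continuous_apply j).comp (continuous_apply i)⟩

lemma matrix_tsum_apply {n : Type*} [Fintype n] {f : ℕ → Matrix n n ℝ} (hf : Summable f)
    (i j : n) : (∑' k, f k) i j = ∑' k, f k i j :=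
  (entryCLM i j).map_tsum hf

lemma matrix_summable_apply {n : Type*} [Fintype n] {f : ℕ → Matrix n n ℝ} (hf : Summable f)
    (i j : n) : Summable fun k => f k i j :=
  hf.map (entryCLM i j).toLinearMap.toAddMonoidHom (entryCLM i j).continuous

lemma mulVec_eq_sum {n : Type*} [Fintype n] (M : Matrix n n ℝ) (v : n → ℝ) (i : n) :
    M.mulVec v i = ∑ j, M i j * v j := rfl

lemma mulVec_entry_nonneg {n : Type*} [Fintype n] {E : Matrix n n ℝ}
    (hE : ∀ i j, 0 ≤ E i j) {v : n → ℝ} (hv : ∀ j, 0 ≤ v j) (i : n) :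
    0 ≤ E.mulVec v i := by
  rw [mulVec_eq_sum]
  exact Finset.sum_nonneg fun j _ => mul_nonneg (hE i j) (hv j)

lemma mulVec_entry_mono {n : Type*} [Fintype n] {E : Matrix n n ℝ}
    (hE : ∀ i j, 0 ≤ E i j) {v w : n → ℝ} (hvw : ∀ j, v j ≤ w j) (i : n) :
    E.mulVec v i ≤ E.mulVec w i := by
  rw [mulVec_eq_sum, mulVec_eq_sum]
  exact Finset.sum_le_sum fun j _ => mul_le_mul_of_nonneg_left (hvw j) (hE i j)

lemma pow_entry_nonneg {n : Type*} [Fintype n] [DecidableEq n] {N : Matrix n n ℝ}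
    (hN : ∀ i j, 0 ≤ N i j) : ∀ (k : ℕ) (i j : n), 0 ≤ (N ^ k) i j := by
  intro k
  induction k with
  | zero =>
      intro i j
      by_cases h : i = j <;> simp [Matrix.one_apply, h]
  | succ k ih =>
      intro i j
      rw [pow_succ, Matrix.mul_apply]
      exact Finset.sum_nonneg fun l _ => mul_nonneg (ih i l) (hN l j)

lemma exp_smul_one {n : Type*} [Fintype n] [DecidableEq n] (r : ℝ) :
    exp (r • (1 : Matrix n n ℝ)) = Real.exp r • (1 : Matrix n n ℝ) := by
  letI : SeminormedRing (Matrix n n ℝ) := Matrix.linftyOpSemiNormedRing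
  letI : NormedRing (Matrix n n ℝ) := Matrix.linftyOpNormedRing
  letI : NormedAlgebra ℝ (Matrix n n ℝ) := Matrix.linftyOpNormedAlgebra
  rw [exp_eq_tsum ℝ]
  beta_reduce
  have h1 : ∀ k : ℕ, ((Nat.factorial k : ℝ))⁻¹ • (r • (1 : Matrix n n ℝ)) ^ k
      = (((Nat.factorial k : ℝ))⁻¹ * r ^ k) • (1 : Matrix n n ℝ) := by
    intro k
    rw [smul_pow, one_pow, smul_smul]
  rw [tsum_congr h1]
  have hs : Summable fun k : ℕ => ((Nat.factorial k : ℝ))⁻¹ * r ^ k := by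
    have := Real.summable_pow_div_factorial r
    simpa [div_eq_mul_inv, mul_comm] using this
  rw [hs.tsum_smul_const]
  congr 1
  rw [Real.exp_eq_exp_ℝ, exp_eq_tsum ℝ]
  simp [smul_eq_mul]

lemma exp_entry_nonneg {n : Type*} [Fintype n] [DecidableEq n] {M : Matrix n n ℝ}
    (hM : ∀ i j, i ≠ j → 0 ≤ M i j) {t : ℝ} (ht : 0 ≤ t) (i j : n) :
    0 ≤ exp (t • M) i j := by
  letI : SeminormedRing (Matrix n n ℝ) := Matrix.linftyOpSemiNormedRing
  letI : NormedRing (Matrix n n ℝ) := Matrix.linftyOpNormedRing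
  letI : NormedAlgebra ℝ (Matrix n n ℝ) := Matrix.linftyOpNormedAlgebra
  set c : ℝ := ∑ k, |M k k| with hc
  have hck : ∀ k, |M k k| ≤ c := fun k =>
    Finset.single_le_sum (fun l _ => abs_nonneg (M l l)) (Finset.mem_univ k)
  set N : Matrix n n ℝ := M + c • (1 : Matrix n n ℝ) with hNdef
  have hN : ∀ a b, 0 ≤ N a b := by
    intro a b
    by_cases h : a = b
    · subst h
      have := abs_le.1 (hck a)
      simp only [hNdef, Matrix.add_apply, Matrix.smul_apply, Matrix.one_apply_eq, smul_eq_mul,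
        mul_one]
      linarith
    · have := hM a b h
      simp only [hNdef, Matrix.add_apply, Matrix.smul_apply, Matrix.one_apply_ne h, smul_eq_mul,
        mul_zero, add_zero]
      exact this
  have hsplit : t • M = t • N + (-(t * c)) • (1 : Matrix n n ℝ) := by
    rw [hNdef, smul_add, smul_smul, add_assoc, ← add_smul]
    simp
  have hcomm : Commute (t • N) ((-(t * c)) • (1 : Matrix n n ℝ)) :=
    (Commute.one_right (t • N)).smul_right _
  rw [hsplit, Matrix.exp_add_of_commute _ _ hcomm, exp_smul_one, Matrix.mul_smul, Matrix.mul_one,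
    Matrix.smul_apply, smul_eq_mul]
  have hE : 0 ≤ exp (t • N) i j := by
    rw [exp_eq_tsum ℝ]
    beta_reduce
    rw [matrix_tsum_apply (expSeries_summable' (𝕂 := ℝ) (t • N))]
    refine tsum_nonneg fun k => ?_
    have : (((Nat.factorial k : ℝ))⁻¹ • (t • N) ^ k) i j
        = ((Nat.factorial k : ℝ))⁻¹ * (t ^ k * ((N ^ k) i j)) := by
      rw [smul_pow]
      simp [smul_eq_mul]
    rw [this]
    have h1 : (0:ℝ) ≤ ((Nat.factorial k : ℝ))⁻¹ := by positivity
    exact mul_nonneg h1 (mul_nonneg (pow_nonneg ht k) (pow_entry_nonneg hN k i j))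
  exact mul_nonneg (Real.exp_pos _).le hE

lemma hasDerivAt_exp_entry {n : Type*} [Fintype n] [DecidableEq n] (M : Matrix n n ℝ)
    (t : ℝ) (i j : n) :
    HasDerivAt (fun s : ℝ => exp (s • M) i j) ((M * exp (t • M)) i j) t := by
  letI : SeminormedRing (Matrix n n ℝ) := Matrix.linftyOpSemiNormedRing
  letI : NormedRing (Matrix n n ℝ) := Matrix.linftyOpNormedRing
  letI : NormedAlgebra ℝ (Matrix n n ℝ) := Matrix.linftyOpNormedAlgebra
  have h := hasDerivAt_exp_smul_const' (𝕂 := ℝ) M t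
  exact ((entryCLM i j).hasFDerivAt.comp_hasDerivAt t h :)

end MatrixAux
section BridgeAux

open NormedSpace

variable {W : Type*}

/-- Weighted degree. -/
noncomputable def gdeg (Q : W → W → ℝ) (hQ : IsGraph Q) (x : W) : ℝ :=
  ∑ z ∈ nbr Q hQ x, Q x z

/-- The matrix of the truncated Laplacian `Δ_S` on an enclosing finite set `B`. -/
noncomputable def gmat (Q : W → W → ℝ) (hQ : IsGraph Q) (S B : Finset W) :
    Matrix B B ℝ :=
  Matrix.of fun x y : B =>
    if (x : W) ∈ S then Q x y - (if x = y then gdeg Q hQ x else 0) else 0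

lemma exists_encl (Q : W → W → ℝ) (hQ : IsGraph Q) (S : Finset W) :
    ∃ B : Finset W, S ⊆ B ∧ ∀ x ∈ S, nbr Q hQ x ⊆ B := by
  classical
  exact ⟨S ∪ S.biUnion (nbr Q hQ), Finset.subset_union_left, fun x hx y hy =>
    Finset.mem_union_right _ (Finset.mem_biUnion.2 ⟨x, hx, hy⟩)⟩

lemma gmat_offdiag_nonneg (Q : W → W → ℝ) (hQ : IsGraph Q) (S B : Finset W) :
    ∀ i j : B, i ≠ j → 0 ≤ gmat Q hQ S B i j := by
  intro i j hij
  by_cases hi : (i : W) ∈ S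
  · simp only [gmat, Matrix.of_apply, hi, if_true, if_neg hij, sub_zero]
    exact hQ.1 _ _
  · simp [gmat, hi]

lemma lapS_eq_mulVec (Q : W → W → ℝ) (hQ : IsGraph Q) {S B : Finset W} (hSB : S ⊆ B)
    (hN : ∀ x ∈ S, nbr Q hQ x ⊆ B) (u : W → ℝ) {x : W} (hx : x ∈ B) :
    lapS Q S u x = (gmat Q hQ S B).mulVec (fun r : B => u r) ⟨x, hx⟩ := by
  rw [mulVec_eq_sum]
  by_cases hxS : x ∈ S
  · have hdiag : ∑ j : B, (if (⟨x, hx⟩ : B) = j then gdeg Q hQ x else 0) * u j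
        = gdeg Q hQ x * u x := by
      rw [Finset.sum_eq_single (⟨x, hx⟩ : B)]
      · simp
      · intro b _ hb
        rw [if_neg (Ne.symm hb), zero_mul]
      · simp
    have hsum : ∑ j : B, Q x j * u j = ∑ y ∈ nbr Q hQ x, Q x y * u y := by
      rw [Finset.sum_coe_sort B (fun y => Q x y * u y)]
      exact (Finset.sum_subset (hN x hxS) fun y _ hy => by
        rw [q_eq_zero_of_not_mem_nbr Q hQ hy, zero_mul]).symm
    have : ∑ j : B, gmat Q hQ S B ⟨x, hx⟩ j * u j
        = ∑ j : B, Q x j * u j - ∑ j : B, (if (⟨x, hx⟩ : B) = j then gdeg Q hQ x else 0) * u j := by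
      rw [← Finset.sum_sub_distrib]
      refine Finset.sum_congr rfl fun j _ => ?_
      simp only [gmat, Matrix.of_apply, hxS, if_true]
      ring
    rw [this, hdiag, hsum, lapS, if_pos hxS, lap_eq_sum Q hQ]
    have h2 : ∀ y ∈ nbr Q hQ x, Q x y * (u y - u x) = Q x y * u y - Q x y * u x :=
      fun y _ => by ring
    rw [Finset.sum_congr rfl h2, Finset.sum_sub_distrib, ← Finset.sum_mul]
    rfl
  · rw [lapS_of_not_mem Q u hxS]
    refine (Finset.sum_eq_zero fun j _ => ?_).symm
    simp [gmat, hxS]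

lemma iterate_lapS_eq_mulVec [DecidableEq W] (Q : W → W → ℝ) (hQ : IsGraph Q)
    {S B : Finset W} (hSB : S ⊆ B)
    (hN : ∀ x ∈ S, nbr Q hQ x ⊆ B) (k : ℕ) (u : W → ℝ) {x : W} (hx : x ∈ B) :
    ((lapS Q S)^[k] u) x = ((gmat Q hQ S B) ^ k).mulVec (fun r : B => u r) ⟨x, hx⟩ := by
  induction k generalizing x with
  | zero => simp [Matrix.one_mulVec]
  | succ k ih =>
      rw [Function.iterate_succ_apply', lapS_eq_mulVec Q hQ hSB hN _ hx]
      have hfun : (fun r : B => ((lapS Q S)^[k] u) ↑r)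
          = ((gmat Q hQ S B) ^ k).mulVec (fun r : B => u r) := by
        funext r
        exact ih r.2
      rw [hfun, Matrix.mulVec_mulVec, ← pow_succ']

lemma serS_eq_exp [DecidableEq W] (Q : W → W → ℝ) (hQ : IsGraph Q) {S B : Finset W}
    (hSB : S ⊆ B)
    (hN : ∀ x ∈ S, nbr Q hQ x ⊆ B) (t : ℝ) (u : W → ℝ) {x : W} (hx : x ∈ B) :
    serS Q S t u x
      = (exp (t • gmat Q hQ S B)).mulVec (fun r : B => u r) ⟨x, hx⟩ := by
  letI : SeminormedRing (Matrix B B ℝ) := Matrix.linftyOpSemiNormedRing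
  letI : NormedRing (Matrix B B ℝ) := Matrix.linftyOpNormedRing
  letI : NormedAlgebra ℝ (Matrix B B ℝ) := Matrix.linftyOpNormedAlgebra
  set G := gmat Q hQ S B with hG
  have hsum := expSeries_summable' (𝕂 := ℝ) (t • G)
  have key : ∀ k : ℕ, t ^ k / (Nat.factorial k : ℝ) * ((lapS Q S)^[k] u) x
      = (((Nat.factorial k : ℝ))⁻¹ • (t • G) ^ k).mulVec (fun r : B => u r) ⟨x, hx⟩ := by
    intro k
    rw [iterate_lapS_eq_mulVec Q hQ hSB hN k u hx, smul_pow, smul_smul,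
      Matrix.smul_mulVec, Pi.smul_apply, smul_eq_mul]
    ring
  rw [serS, tsum_congr key, exp_eq_tsum ℝ]
  beta_reduce
  rw [mulVec_eq_sum]
  have hterm : ∀ j : B, (∑' k : ℕ, ((Nat.factorial k : ℝ))⁻¹ • (t • G) ^ k) ⟨x, hx⟩ j
      * u j = ∑' k : ℕ, (((Nat.factorial k : ℝ))⁻¹ • (t • G) ^ k) ⟨x, hx⟩ j * u j := by
    intro j
    rw [matrix_tsum_apply hsum, tsum_mul_right]
  rw [Finset.sum_congr rfl fun j _ => hterm j]
  rw [← Summable.tsum_finsetSum (fun j _ => ((matrix_summable_apply hsum _ j).mul_right _))]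
  refine tsum_congr fun k => ?_
  rw [mulVec_eq_sum]

lemma serS_add (Q : W → W → ℝ) (hQ : IsGraph Q) (S : Finset W) (t : ℝ) (u v : W → ℝ) (x : W) :
    serS Q S t (fun z => u z + v z) x = serS Q S t u x + serS Q S t v x := by
  haveI := Classical.decEq W
  obtain ⟨B, hSB, hN⟩ := exists_encl Q hQ S
  by_cases hx : x ∈ B
  · rw [serS_eq_exp Q hQ hSB hN t _ hx, serS_eq_exp Q hQ hSB hN t u hx,
      serS_eq_exp Q hQ hSB hN t v hx]
    rw [show (fun r : B => u ↑r + v ↑r)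
        = (fun r : B => u ↑r) + fun r : B => v ↑r from rfl,
      Matrix.mulVec_add, Pi.add_apply]
  · have hxS : x ∉ S := fun h => hx (hSB h)
    rw [serS_of_not_mem Q S t _ hxS, serS_of_not_mem Q S t u hxS, serS_of_not_mem Q S t v hxS]

lemma serS_smul (Q : W → W → ℝ) (hQ : IsGraph Q) (S : Finset W) (t : ℝ) (c : ℝ) (u : W → ℝ)
    (x : W) : serS Q S t (fun z => c * u z) x = c * serS Q S t u x := by
  haveI := Classical.decEq W
  obtain ⟨B, hSB, hN⟩ := exists_encl Q hQ S
  by_cases hx : x ∈ B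
  · rw [serS_eq_exp Q hQ hSB hN t _ hx, serS_eq_exp Q hQ hSB hN t u hx]
    rw [show (fun r : B => c * u ↑r) = c • fun r : B => u ↑r from rfl,
      Matrix.mulVec_smul, Pi.smul_apply, smul_eq_mul]
  · have hxS : x ∉ S := fun h => hx (hSB h)
    rw [serS_of_not_mem Q S t _ hxS, serS_of_not_mem Q S t u hxS]

lemma serS_nonneg (Q : W → W → ℝ) (hQ : IsGraph Q) (S : Finset W) {t : ℝ} (ht : 0 ≤ t)
    {u : W → ℝ} (hu : ∀ z, 0 ≤ u z) (x : W) : 0 ≤ serS Q S t u x := by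
  haveI := Classical.decEq W
  obtain ⟨B, hSB, hN⟩ := exists_encl Q hQ S
  by_cases hx : x ∈ B
  · rw [serS_eq_exp Q hQ hSB hN t u hx]
    exact mulVec_entry_nonneg (exp_entry_nonneg (gmat_offdiag_nonneg Q hQ S B) ht)
      (fun r => hu ↑r) _
  · have hxS : x ∉ S := fun h => hx (hSB h)
    rw [serS_of_not_mem Q S t u hxS]
    exact hu x

lemma serS_mono (Q : W → W → ℝ) (hQ : IsGraph Q) (S : Finset W) {t : ℝ} (ht : 0 ≤ t)
    {u v : W → ℝ} (huv : ∀ z, u z ≤ v z) (x : W) : serS Q S t u x ≤ serS Q S t v x := by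
  have h0 := serS_nonneg Q hQ S ht (u := fun z => v z - u z)
    (fun z => sub_nonneg.2 (huv z)) x
  have h2 : serS Q S t (fun z => u z + (v z - u z)) x
      = serS Q S t u x + serS Q S t (fun z => v z - u z) x := serS_add Q hQ S t _ _ x
  rw [show (fun z => u z + (v z - u z)) = v from funext fun z => by ring] at h2
  linarith

lemma serS_neg (Q : W → W → ℝ) (hQ : IsGraph Q) (S : Finset W) (t : ℝ) (u : W → ℝ) (x : W) :
    serS Q S t (fun z => -u z) x = -serS Q S t u x := by
  have := serS_smul Q hQ S t (-1) u x
  simpa using this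

lemma abs_serS_le (Q : W → W → ℝ) (hQ : IsGraph Q) (S : Finset W) {t : ℝ} (ht : 0 ≤ t)
    (u : W → ℝ) (x : W) : |serS Q S t u x| ≤ serS Q S t (fun z => |u z|) x := by
  rw [abs_le]
  constructor
  · have h1 : serS Q S t (fun z => -|u z|) x ≤ serS Q S t u x :=
      serS_mono Q hQ S ht (fun z => neg_abs_le (u z)) x
    have h2 := serS_neg Q hQ S t (fun z => |u z|) x
    rw [h2] at h1
    linarith
  · exact serS_mono Q hQ S ht (fun z => le_abs_self (u z)) x

lemma lapS_serS_nonneg (Q : W → W → ℝ) (hQ : IsGraph Q) (S : Finset W) {t : ℝ} (ht : 0 ≤ t)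
    {u₀ : W → ℝ} (hu0 : ∀ z ∈ S, u₀ z = 0) (hnn : ∀ z, 0 ≤ u₀ z) (x : W) :
    0 ≤ lapS Q S (serS Q S t u₀) x := by
  haveI := Classical.decEq W
  obtain ⟨B, hSB, hN⟩ := exists_encl Q hQ S
  by_cases hxS : x ∈ S
  · letI : SeminormedRing (Matrix B B ℝ) := Matrix.linftyOpSemiNormedRing
    letI : NormedRing (Matrix B B ℝ) := Matrix.linftyOpNormedRing
    letI : NormedAlgebra ℝ (Matrix B B ℝ) := Matrix.linftyOpNormedAlgebra
    rw [lapS_eq_mulVec Q hQ hSB hN _ (hSB hxS)]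
    have hres : (fun r : B => serS Q S t u₀ ↑r)
        = (exp (t • gmat Q hQ S B)).mulVec (fun r : B => u₀ ↑r) := by
      funext r
      exact serS_eq_exp Q hQ hSB hN t u₀ r.2
    rw [hres, Matrix.mulVec_mulVec]
    have hcomm : gmat Q hQ S B * exp (t • gmat Q hQ S B)
        = exp (t • gmat Q hQ S B) * gmat Q hQ S B :=
      (((Commute.refl (gmat Q hQ S B)).smul_right t).exp_right).eq
    rw [hcomm, ← Matrix.mulVec_mulVec]
    refine mulVec_entry_nonneg (exp_entry_nonneg (gmat_offdiag_nonneg Q hQ S B) ht) ?_ _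
    intro r
    have hGr : (gmat Q hQ S B).mulVec (fun r : B => u₀ ↑r) r = lapS Q S u₀ ↑r :=
      (lapS_eq_mulVec Q hQ hSB hN u₀ r.2).symm
    rw [hGr]
    by_cases hr : (r : W) ∈ S
    · rw [lapS, if_pos hr, lap_eq_sum Q hQ]
      refine Finset.sum_nonneg fun z _ => ?_
      rw [hu0 ↑r hr, sub_zero]
      exact mul_nonneg (hQ.1 _ _) (hnn z)
    · rw [lapS_of_not_mem Q u₀ hr]
  · rw [lapS_of_not_mem Q _ hxS]

lemma hasDerivAt_serS (Q : W → W → ℝ) (hQ : IsGraph Q) {S B : Finset W} (hSB : S ⊆ B)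
    (hN : ∀ x ∈ S, nbr Q hQ x ⊆ B) (u : W → ℝ) {x : W} (hx : x ∈ B) (t : ℝ) :
    HasDerivAt (fun s : ℝ => serS Q S s u x) (lapS Q S (serS Q S t u) x) t := by
  haveI := Classical.decEq W
  set G := gmat Q hQ S B with hG
  have hfun : (fun s : ℝ => serS Q S s u x)
      = fun s => ∑ r : B, exp (s • G) ⟨x, hx⟩ r * u ↑r := by
    funext s
    rw [serS_eq_exp Q hQ hSB hN s u hx, mulVec_eq_sum]
  rw [hfun]
  have hder : HasDerivAt (fun s : ℝ => ∑ r : B, exp (s • G) ⟨x, hx⟩ r * u ↑r)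
      (∑ r : B, (G * exp (t • G)) ⟨x, hx⟩ r * u ↑r) t :=
    HasDerivAt.fun_sum fun r _ => (hasDerivAt_exp_entry G t ⟨x, hx⟩ r).mul_const (u ↑r)
  convert hder using 1
  rw [lapS_eq_mulVec Q hQ hSB hN _ hx]
  have hres : (fun r : B => serS Q S t u ↑r)
      = (exp (t • G)).mulVec (fun r : B => u ↑r) := by
    funext r
    exact serS_eq_exp Q hQ hSB hN t u r.2
  rw [hres, Matrix.mulVec_mulVec, mulVec_eq_sum]

end BridgeAux
section HeatAux

open NormedSpace

variable {W : Type*}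

lemma heatS_le_one (Q : W → W → ℝ) (hQ : IsGraph Q) (S : Finset W) {t : ℝ} (ht : 0 ≤ t)
    {u : W → ℝ} (hu1 : ∀ z, u z ≤ 1) (x : W) : heatS Q S t u x ≤ 1 := by
  rw [heatS_eq_serS]
  calc serS Q S t (fun v => if v ∈ S then u v else 0) x
      ≤ serS Q S t (fun _ => (1:ℝ)) x := by
        refine serS_mono Q hQ S ht (fun z => ?_) x
        by_cases hz : z ∈ S <;> simp [hz, hu1 z]
    _ = 1 := serS_const Q S t 1 x

lemma heatS_le_heatPos (Q : W → W → ℝ) (hQ : IsGraph Q) {t : ℝ} (ht : 0 ≤ t)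
    {u : W → ℝ} (hu1 : ∀ z, u z ≤ 1) (S : Finset W) (x : W) :
    heatS Q S t u x ≤ heatPos Q t u x := by
  have hb : BddAbove (Set.range fun T : Finset W => heatS Q T t u x) := by
    refine ⟨1, ?_⟩
    rintro _ ⟨T, rfl⟩
    exact heatS_le_one Q hQ T ht hu1 x
  show heatS Q S t u x ≤ ⨆ T : Finset W, heatS Q T t u x
  exact le_ciSup hb S

lemma heatPos_zero_fun (Q : W → W → ℝ) (t : ℝ) (x : W) :
    heatPos Q t (fun _ => (0:ℝ)) x = 0 := by
  have h : ∀ S : Finset W, heatS Q S t (fun _ => (0:ℝ)) x = 0 := by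
    intro S
    rw [heatS_eq_serS]
    have : (fun v => if v ∈ S then (0:ℝ) else 0) = fun _ => (0:ℝ) := by
      funext v; simp
    rw [this, serS_const]
  simp only [heatPos, h, ciSup_const]

lemma heat_eq_heatPos (Q : W → W → ℝ) (t : ℝ) {u : W → ℝ} (hu : ∀ z, 0 ≤ u z) (x : W) :
    heat Q t u x = heatPos Q t u x := by
  unfold heat
  have h1 : (fun v => max (u v) 0) = u := funext fun v => max_eq_left (hu v)
  have h2 : (fun v => max (-u v) 0) = fun _ => (0:ℝ) :=
    funext fun v => max_eq_right (neg_nonpos.2 (hu v))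
  rw [h1, h2, heatPos_zero_fun, sub_zero]

end HeatAux

section CouplingComparison

open NormedSpace

/-- The key comparison: the probability that the coupled chain leaves `A₁ ×ˢ A₂` is at most
the sum of the probabilities that the marginal chains leave `A₁`, `A₂` respectively. -/
lemma coupling_exit_bound {V : Type*} (q : V → V → ℝ) (qt : V × V → V × V → ℝ)
    (hq : IsGraph q) (hqt : IsGraph qt)
    (hc1 : ∀ (h : V → ℝ) (p : V × V), lap qt (fun r => h r.1) p = lap q h p.1)
    (hc2 : ∀ (h : V → ℝ) (p : V × V), lap qt (fun r => h r.2) p = lap q h p.2)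
    (A₁ A₂ : Finset V) {t : ℝ} (ht : 0 ≤ t) (x y : V) :
    serS qt (A₁ ×ˢ A₂) t (fun r => if r ∈ A₁ ×ˢ A₂ then (0:ℝ) else 1) (x, y)
      ≤ serS q A₁ t (fun z => if z ∈ A₁ then (0:ℝ) else 1) x
        + serS q A₂ t (fun z => if z ∈ A₂ then (0:ℝ) else 1) y := by
  classical
  set v₁ : V → ℝ := fun z => if z ∈ A₁ then (0:ℝ) else 1 with hv₁
  set v₂ : V → ℝ := fun z => if z ∈ A₂ then (0:ℝ) else 1 with hv₂
  set St : Finset (V × V) := A₁ ×ˢ A₂ with hSt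
  set u : V × V → ℝ := fun r => if r ∈ St then (0:ℝ) else 1 with hu
  have hv₁nn : ∀ z, 0 ≤ v₁ z := fun z => by by_cases h : z ∈ A₁ <;> simp [hv₁, h]
  have hv₂nn : ∀ z, 0 ≤ v₂ z := fun z => by by_cases h : z ∈ A₂ <;> simp [hv₂, h]
  by_cases hp : (x, y) ∈ St
  case neg =>
    have hLHS : serS qt St t u (x, y) = 1 := by
      rw [serS_of_not_mem qt St t u hp]
      simp [hu, hp]
    rw [hLHS]
    rw [hSt, Finset.mem_product, not_and_or] at hp
    rcases hp with hx | hy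
    · have h1 : serS q A₁ t v₁ x = 1 := by
        rw [serS_of_not_mem q A₁ t v₁ hx]
        simp [hv₁, hx]
      have h2 : 0 ≤ serS q A₂ t v₂ y := serS_nonneg q hq A₂ ht hv₂nn y
      linarith
    · have h1 : serS q A₂ t v₂ y = 1 := by
        rw [serS_of_not_mem q A₂ t v₂ hy]
        simp [hv₂, hy]
      have h2 : 0 ≤ serS q A₁ t v₁ x := serS_nonneg q hq A₁ ht hv₁nn x
      linarith
  case pos =>
    obtain ⟨Bt, hSBt, hNt⟩ := exists_encl qt hqt St
    obtain ⟨C₁, hSC₁, hNC₁⟩ := exists_encl q hq A₁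
    obtain ⟨C₂, hSC₂, hNC₂⟩ := exists_encl q hq A₂
    classical
    set B₁ : Finset V := C₁ ∪ Bt.image Prod.fst with hB₁
    set B₂ : Finset V := C₂ ∪ Bt.image Prod.snd with hB₂
    have hSB₁ : A₁ ⊆ B₁ := hSC₁.trans Finset.subset_union_left
    have hSB₂ : A₂ ⊆ B₂ := hSC₂.trans Finset.subset_union_left
    have hN₁ : ∀ z ∈ A₁, nbr q hq z ⊆ B₁ := fun z hz =>
      (hNC₁ z hz).trans Finset.subset_union_left
    have hN₂ : ∀ z ∈ A₂, nbr q hq z ⊆ B₂ := fun z hz =>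
      (hNC₂ z hz).trans Finset.subset_union_left
    have hfst : ∀ r : Bt, (r : V × V).1 ∈ B₁ := fun r =>
      Finset.mem_union_right _ (Finset.mem_image.2 ⟨↑r, r.2, rfl⟩)
    have hsnd : ∀ r : Bt, (r : V × V).2 ∈ B₂ := fun r =>
      Finset.mem_union_right _ (Finset.mem_image.2 ⟨↑r, r.2, rfl⟩)
    set G := gmat qt hqt St Bt with hG
    have hpB : (x, y) ∈ Bt := hSBt hp
    set p₀ : Bt := (⟨(x, y), hpB⟩ : Bt) with hp₀
    set ψ₁ : ℝ → V → ℝ := fun s => serS q A₁ s v₁ with hψ₁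
    set ψ₂ : ℝ → V → ℝ := fun s => serS q A₂ s v₂ with hψ₂
    set Fv : ℝ → (Bt → ℝ) := fun s r => ψ₁ s (r : V × V).1 + ψ₂ s (r : V × V).2 with hFv
    set g : ℝ → ℝ := fun s => (exp ((t - s) • G)).mulVec (Fv s) p₀ with hgdef
    set dF : ℝ → (Bt → ℝ) := fun s r =>
      lapS q A₁ (ψ₁ s) (r : V × V).1 + lapS q A₂ (ψ₂ s) (r : V × V).2 with hdF
    -- derivative of g
    have hgder : ∀ s : ℝ, HasDerivAt g
        ((exp ((t - s) • G)).mulVec (fun r => dF s r - G.mulVec (Fv s) r) p₀) s := by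
      intro s
      have hterm : ∀ r : Bt, HasDerivAt
          (fun s' : ℝ => exp ((t - s') • G) p₀ r * Fv s' r)
          (((G * exp ((t - s) • G)) p₀ r) * (-1) * Fv s r
            + exp ((t - s) • G) p₀ r * dF s r) s := by
        intro r
        have ha : HasDerivAt (fun s' : ℝ => exp ((t - s') • G) p₀ r)
            (((G * exp ((t - s) • G)) p₀ r) * (-1)) s := by
          have hout := hasDerivAt_exp_entry G (t - s) p₀ r
          have hin : HasDerivAt (fun s' : ℝ => t - s') (-1) s := by
            simpa using (hasDerivAt_id s).const_sub t
          exact HasDerivAt.comp s hout hin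
        have hb : HasDerivAt (fun s' : ℝ => Fv s' r) (dF s r) s := by
          have h1 := hasDerivAt_serS q hq hSB₁ hN₁ v₁ (hfst r) s
          have h2 := hasDerivAt_serS q hq hSB₂ hN₂ v₂ (hsnd r) s
          exact h1.add h2
        have := ha.mul hb
        exact this
      have hsum := HasDerivAt.fun_sum (u := (Finset.univ : Finset Bt)) fun r _ => hterm r
      have hgfun : g = fun s' : ℝ => ∑ r : Bt, exp ((t - s') • G) p₀ r * Fv s' r := by
        funext s'
        rw [hgdef]
        beta_reduce
        rw [mulVec_eq_sum]
      rw [hgfun]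
      convert hsum using 1
      case e'_4 => rfl
      case e'_5 => rfl
      -- identify derivative
      have hcomm : G * exp ((t - s) • G) = exp ((t - s) • G) * G :=
        (((Commute.refl G).smul_right (t - s)).exp_right).eq
      rw [mulVec_eq_sum]
      rw [Finset.sum_congr rfl (fun r _ => (mul_sub (exp ((t - s) • G) p₀ r) (dF s r)
        (G.mulVec (Fv s) r) : _)), Finset.sum_sub_distrib]
      have hswap : ∑ r : Bt, exp ((t - s) • G) p₀ r * G.mulVec (Fv s) r
          = ∑ r : Bt, (G * exp ((t - s) • G)) p₀ r * Fv s r := by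
        have e1 : ∑ r : Bt, exp ((t - s) • G) p₀ r * G.mulVec (Fv s) r
            = ((exp ((t - s) • G)) * G).mulVec (Fv s) p₀ := by
          rw [← Matrix.mulVec_mulVec, mulVec_eq_sum]
        have e2 : ∑ r : Bt, (G * exp ((t - s) • G)) p₀ r * Fv s r
            = (G * exp ((t - s) • G)).mulVec (Fv s) p₀ := by
          rw [mulVec_eq_sum]
        rw [e1, e2, hcomm]
      rw [hswap]
      rw [Finset.sum_congr rfl (fun r _ => by ring :
        ∀ r ∈ (Finset.univ : Finset Bt),
          (G * exp ((t - s) • G)) p₀ r * (-1) * Fv s r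
            + exp ((t - s) • G) p₀ r * dF s r
          = exp ((t - s) • G) p₀ r * dF s r
            - (G * exp ((t - s) • G)) p₀ r * Fv s r), Finset.sum_sub_distrib]
    -- nonnegativity of the derivative on [0, t]
    have hgnn : ∀ s ∈ Set.Icc (0:ℝ) t,
        0 ≤ (exp ((t - s) • G)).mulVec (fun r => dF s r - G.mulVec (Fv s) r) p₀ := by
      intro s hs
      have hts : 0 ≤ t - s := by linarith [hs.2]
      refine mulVec_entry_nonneg (exp_entry_nonneg (gmat_offdiag_nonneg qt hqt St Bt) hts) ?_ p₀
      intro r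
      have hGF : G.mulVec (Fv s) r = lapS qt St (fun r' : V × V => ψ₁ s r'.1 + ψ₂ s r'.2) ↑r := by
        have := lapS_eq_mulVec qt hqt hSBt hNt
          (fun r' : V × V => ψ₁ s r'.1 + ψ₂ s r'.2) r.2
        rw [this]
      rw [hGF]
      by_cases hr : (r : V × V) ∈ St
      · have hmem := Finset.mem_product.1 hr
        rw [lapS, if_pos hr]
        have hla : lap qt (fun r' : V × V => ψ₁ s r'.1 + ψ₂ s r'.2) ↑r
            = lap q (ψ₁ s) (r : V × V).1 + lap q (ψ₂ s) (r : V × V).2 := by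
          rw [lap_add qt hqt (fun r' : V × V => ψ₁ s r'.1) (fun r' : V × V => ψ₂ s r'.2),
            hc1 (ψ₁ s), hc2 (ψ₂ s)]
        rw [hla]
        have e1 : lapS q A₁ (ψ₁ s) (r : V × V).1 = lap q (ψ₁ s) (r : V × V).1 := by
          rw [lapS, if_pos hmem.1]
        have e2 : lapS q A₂ (ψ₂ s) (r : V × V).2 = lap q (ψ₂ s) (r : V × V).2 := by
          rw [lapS, if_pos hmem.2]
        have edF : dF s r = lap q (ψ₁ s) (r : V × V).1 + lap q (ψ₂ s) (r : V × V).2 := by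
          show lapS q A₁ (ψ₁ s) (r : V × V).1 + lapS q A₂ (ψ₂ s) (r : V × V).2 = _
          rw [e1, e2]
        rw [edF]
        simp
      · rw [lapS_of_not_mem qt _ hr, sub_zero]
        have h1 := lapS_serS_nonneg q hq A₁ hs.1 (u₀ := v₁)
          (fun z hz => by simp [hv₁, hz]) hv₁nn (r : V × V).1
        have h2 := lapS_serS_nonneg q hq A₂ hs.1 (u₀ := v₂)
          (fun z hz => by simp [hv₂, hz]) hv₂nn (r : V × V).2
        show 0 ≤ lapS q A₁ (ψ₁ s) (r : V × V).1 + lapS q A₂ (ψ₂ s) (r : V × V).2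
        exact add_nonneg h1 h2
    -- monotonicity of g on [0, t]
    have hdiff : ∀ s : ℝ, DifferentiableAt ℝ g s := fun s => (hgder s).differentiableAt
    have hmono : MonotoneOn g (Set.Icc 0 t) := by
      refine monotoneOn_of_deriv_nonneg (convex_Icc 0 t)
        (fun s _ => (hdiff s).continuousAt.continuousWithinAt)
        (fun s _ => (hdiff s).differentiableWithinAt) ?_
      intro s hs
      rw [interior_Icc] at hs
      rw [(hgder s).deriv]
      exact hgnn s ⟨hs.1.le, hs.2.le⟩
    have hg0t : g 0 ≤ g t := hmono (Set.left_mem_Icc.2 ht) (Set.right_mem_Icc.2 ht) ht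
    -- endpoints
    have hgt : g t = ψ₁ t x + ψ₂ t y := by
      show (exp ((t - t) • G)).mulVec (Fv t) p₀ = _
      rw [sub_self, zero_smul, exp_zero, Matrix.one_mulVec]
    have hg0 : serS qt St t u (x, y) ≤ g 0 := by
      show _ ≤ (exp ((t - 0) • G)).mulVec (Fv 0) p₀
      rw [sub_zero]
      rw [serS_eq_exp qt hqt hSBt hNt t u hpB]
      refine mulVec_entry_mono (exp_entry_nonneg (gmat_offdiag_nonneg qt hqt St Bt) ht) ?_ p₀
      intro r
      have hF0 : Fv 0 r = v₁ (r : V × V).1 + v₂ (r : V × V).2 := by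
        show serS q A₁ 0 v₁ (r : V × V).1 + serS q A₂ 0 v₂ (r : V × V).2 = _
        rw [serS_zero, serS_zero]
      rw [hF0]
      by_cases hr : (r : V × V) ∈ St
      · have : u ↑r = 0 := by simp [hu, hr]
        rw [this]
        exact add_nonneg (hv₁nn _) (hv₂nn _)
      · have hur : u ↑r = 1 := by simp [hu, hr]
        rw [hur]
        rw [hSt, Finset.mem_product, not_and_or] at hr
        rcases hr with h1 | h2
        · have : v₁ (r : V × V).1 = 1 := by simp [hv₁, h1]
          rw [this]
          linarith [hv₂nn (r : V × V).2]
        · have : v₂ (r : V × V).2 = 1 := by simp [hv₂, h2]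
          rw [this]
          linarith [hv₁nn (r : V × V).1]
    calc serS qt St t u (x, y) ≤ g 0 := hg0
      _ ≤ g t := hg0t
      _ = ψ₁ t x + ψ₂ t y := hgt

end CouplingComparison
theorem liouville_via_coupling
    {V : Type*} [Countable V] (q : V → V → ℝ) (qt : V × V → V × V → ℝ)
    (hg : IsGraph q) (hrev : IsReversible q) (hsc : StochasticallyComplete q)
    (hcpl : IsCouplingGraph q qt)
    (hW : ∀ p : V × V,
      Filter.Tendsto (fun t => heat qt t (fun r => if r.1 ≠ r.2 then (1 : ℝ) else 0) p)
        Filter.atTop (nhds 0))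
    (f : V → ℝ) (hf : IsBoundedFun f) (hharm : ∀ x, lap q f x = 0) :
    ∀ x y : V, f x = f y := by
  intro x y
  obtain ⟨C, hC⟩ := hf
  have hC0 : 0 ≤ C := le_trans (abs_nonneg (f x)) (hC x)
  have hqt : IsGraph qt := hcpl.1
  have hc1 : ∀ (h : V → ℝ) (p : V × V), lap qt (fun r => h r.1) p = lap q h p.1 :=
    fun h => (hcpl.2 h).1
  have hc2 : ∀ (h : V → ℝ) (p : V × V), lap qt (fun r => h r.2) p = lap q h p.2 :=
    fun h => (hcpl.2 h).2
  set indW : V × V → ℝ := fun r => if r.1 ≠ r.2 then (1 : ℝ) else 0 with hindW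
  have hind0 : ∀ r, 0 ≤ indW r := fun r => by
    by_cases h : r.1 = r.2 <;> simp [hindW, h]
  have hind1 : ∀ r, indW r ≤ 1 := fun r => by
    by_cases h : r.1 = r.2 <;> simp [hindW, h]
  set g₀ : V × V → ℝ := fun r => f r.1 - f r.2 with hg₀
  have hg₀harm : ∀ p, lap qt g₀ p = 0 := by
    intro p
    have h1 : lap qt (fun r : V × V => f r.1 - f r.2) p
        = lap qt (fun r : V × V => f r.1) p - lap qt (fun r : V × V => f r.2) p :=
      lap_sub qt hqt _ _ p
    rw [hg₀, h1, hc1 f p, hc2 f p, hharm, hharm, sub_zero]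
  have hg₀bd : ∀ r : V × V, |g₀ r| ≤ 2 * C * indW r := by
    intro r
    by_cases h : r.1 = r.2
    · have hz : g₀ r = 0 := by rw [hg₀]; simp [h]
      simp [hz, hindW, h]
    · have h1 : indW r = 1 := by simp [hindW, h]
      rw [h1, mul_one]
      calc |g₀ r| = |f r.1 - f r.2| := rfl
        _ ≤ |f r.1| + |f r.2| := abs_sub (f r.1) (f r.2)
        _ ≤ 2 * C := by linarith [hC r.1, hC r.2]
  -- main bound
  have hbound : ∀ t : ℝ, 0 ≤ t → |f x - f y| ≤ 2 * C * heat qt t indW (x, y) := by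
    intro t ht
    have hheat : heat qt t indW (x, y) = heatPos qt t indW (x, y) :=
      heat_eq_heatPos qt t hind0 (x, y)
    rw [hheat]
    refine le_of_forall_pos_le_add ?_
    intro ε hε
    -- stochastic completeness of the base graph, unfolded
    have hsc1 : heatPos q t (fun _ => (1:ℝ)) x = 1 := by
      have h0 := hsc t ht x
      unfold heat at h0
      have e1 : (fun v : V => max ((fun _ => (1:ℝ)) v) 0) = fun _ => (1:ℝ) := by
        funext v; norm_num
      have e2 : (fun v : V => max (-(fun _ => (1:ℝ)) v) 0) = fun _ => (0:ℝ) := by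
        funext v; norm_num
      rw [e1, e2, heatPos_zero_fun, sub_zero] at h0
      exact h0
    have hsc2 : heatPos q t (fun _ => (1:ℝ)) y = 1 := by
      have h0 := hsc t ht y
      unfold heat at h0
      have e1 : (fun v : V => max ((fun _ => (1:ℝ)) v) 0) = fun _ => (1:ℝ) := by
        funext v; norm_num
      have e2 : (fun v : V => max (-(fun _ => (1:ℝ)) v) 0) = fun _ => (0:ℝ) := by
        funext v; norm_num
      rw [e1, e2, heatPos_zero_fun, sub_zero] at h0
      exact h0
    set δ : ℝ := ε / (4 * C + 4) with hδ
    have hδpos : 0 < δ := by positivity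
    have hApick : ∀ z : V, heatPos q t (fun _ => (1:ℝ)) z = 1 →
        ∃ A : Finset V, serS q A t (fun w => if w ∈ A then (0:ℝ) else 1) z ≤ δ := by
      intro z hz
      have h1 : (1 : ℝ) - δ < ⨆ S : Finset V, heatS q S t (fun _ => (1:ℝ)) z := by
        have : heatPos q t (fun _ => (1:ℝ)) z = ⨆ S : Finset V, heatS q S t (fun _ => (1:ℝ)) z :=
          rfl
        rw [← this, hz]
        linarith
      obtain ⟨A, hA⟩ := exists_lt_of_lt_ciSup h1
      refine ⟨A, ?_⟩
      have hsum : serS q A t (fun w => if w ∈ A then (0:ℝ) else 1) z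
          + heatS q A t (fun _ => (1:ℝ)) z = 1 := by
        rw [heatS_eq_serS]
        have hadd := serS_add q hg A t (fun w => if w ∈ A then (0:ℝ) else 1)
          (fun w => if w ∈ A then (1:ℝ) else 0) z
        have hfe : (fun w => (if w ∈ A then (0:ℝ) else 1) + (if w ∈ A then (1:ℝ) else 0))
            = fun _ => (1:ℝ) := by
          funext w
          by_cases hw : w ∈ A <;> simp [hw]
        rw [hfe, serS_const] at hadd
        have hfe2 : (fun w => if w ∈ A then (fun _ => (1:ℝ)) w else 0)
            = fun w => if w ∈ A then (1:ℝ) else 0 := rfl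
        rw [hfe2]
        linarith
      linarith
    obtain ⟨A₁, hA₁⟩ := hApick x hsc1
    obtain ⟨A₂, hA₂⟩ := hApick y hsc2
    have hcmp := coupling_exit_bound q qt hg hqt hc1 hc2 A₁ A₂ ht x y
    set St : Finset (V × V) := A₁ ×ˢ A₂ with hSt
    set u : V × V → ℝ := fun r => if r ∈ St then (0:ℝ) else 1 with hu
    have hunn : ∀ r, 0 ≤ u r := fun r => by
      by_cases h : r ∈ St <;> simp [hu, h]
    -- step B : pointwise domination
    have hB : |f x - f y| ≤ 2 * C * heatPos qt t indW (x, y) + 2 * C * serS qt St t u (x, y) := by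
      have h1 : serS qt St t g₀ (x, y) = g₀ (x, y) := serS_harm qt St t hg₀harm (x, y)
      have h2 : |f x - f y| = |serS qt St t g₀ (x, y)| := by
        rw [h1]
      rw [h2]
      have h3 : |serS qt St t g₀ (x, y)| ≤ serS qt St t (fun r => |g₀ r|) (x, y) :=
        abs_serS_le qt hqt St ht g₀ (x, y)
      have h4 : serS qt St t (fun r => |g₀ r|) (x, y)
          ≤ serS qt St t (fun r => (if r ∈ St then 2 * C * indW r else 0) + 2 * C * u r)
            (x, y) := by
        refine serS_mono qt hqt St ht (fun r => ?_) (x, y)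
        by_cases hr : r ∈ St
        · have : u r = 0 := by simp [hu, hr]
          rw [if_pos hr, this, mul_zero, add_zero]
          exact hg₀bd r
        · have : u r = 1 := by simp [hu, hr]
          rw [if_neg hr, this, mul_one, zero_add]
          calc |g₀ r| ≤ 2 * C * indW r := hg₀bd r
            _ ≤ 2 * C * 1 := by
                have := hind1 r
                nlinarith [hind0 r]
            _ = 2 * C := mul_one _
      have h5 : serS qt St t (fun r => (if r ∈ St then 2 * C * indW r else 0) + 2 * C * u r)
          (x, y) = serS qt St t (fun r => if r ∈ St then 2 * C * indW r else 0) (x, y)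
            + serS qt St t (fun r => 2 * C * u r) (x, y) :=
        serS_add qt hqt St t _ _ (x, y)
      have h6 : serS qt St t (fun r => if r ∈ St then 2 * C * indW r else 0) (x, y)
          = 2 * C * serS qt St t (fun r => if r ∈ St then indW r else 0) (x, y) := by
        have hfe : (fun r => if r ∈ St then 2 * C * indW r else 0)
            = fun r => 2 * C * (if r ∈ St then indW r else 0) := by
          funext r
          by_cases hr : r ∈ St <;> simp [hr]
        rw [hfe, serS_smul qt hqt]
      have h7 : serS qt St t (fun r => 2 * C * u r) (x, y)
          = 2 * C * serS qt St t u (x, y) := serS_smul qt hqt St t _ u (x, y)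
      have h8 : serS qt St t (fun r => if r ∈ St then indW r else 0) (x, y)
          ≤ heatPos qt t indW (x, y) := by
        have hbr : serS qt St t (fun r => if r ∈ St then indW r else 0) (x, y)
            = heatS qt St t indW (x, y) := by
          rw [heatS_eq_serS]
          congr 1
          funext r
          by_cases hr : r ∈ St <;> simp [hr]
        rw [hbr]
        exact heatS_le_heatPos qt hqt ht hind1 St (x, y)
      have h9 : 2 * C * serS qt St t (fun r => if r ∈ St then indW r else 0) (x, y)
          ≤ 2 * C * heatPos qt t indW (x, y) := by
        have h2C : (0:ℝ) ≤ 2 * C := by linarith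
        exact mul_le_mul_of_nonneg_left h8 h2C
      calc |serS qt St t g₀ (x, y)| ≤ serS qt St t (fun r => |g₀ r|) (x, y) := h3
        _ ≤ _ := h4
        _ = _ := h5
        _ ≤ 2 * C * heatPos qt t indW (x, y) + 2 * C * serS qt St t u (x, y) := by
            rw [h6, h7]
            linarith
    -- step C : the exit term is small
    have hCsmall : 2 * C * serS qt St t u (x, y) ≤ ε := by
      have hle : serS qt St t u (x, y) ≤ 2 * δ := by
        calc serS qt St t u (x, y)
            ≤ serS q A₁ t (fun z => if z ∈ A₁ then (0:ℝ) else 1) x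
              + serS q A₂ t (fun z => if z ∈ A₂ then (0:ℝ) else 1) y := hcmp
          _ ≤ δ + δ := add_le_add hA₁ hA₂
          _ = 2 * δ := by ring
      have h2C : (0:ℝ) ≤ 2 * C := by linarith
      calc 2 * C * serS qt St t u (x, y) ≤ 2 * C * (2 * δ) :=
            mul_le_mul_of_nonneg_left hle h2C
        _ = 4 * C * (ε / (4 * C + 4)) := by rw [hδ]; ring
        _ ≤ ε := by
            rw [div_eq_mul_inv]
            have h44 : (0:ℝ) < 4 * C + 4 := by linarith
            rw [mul_comm ε, ← mul_assoc]
            have : 4 * C * (4 * C + 4)⁻¹ ≤ 1 := by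
              rw [← div_eq_mul_inv, div_le_one h44]
              linarith
            nlinarith [hε.le]
    linarith
  -- limit t → ∞
  have hlim : Filter.Tendsto (fun t => 2 * C * heat qt t indW (x, y))
      Filter.atTop (nhds 0) := by
    have h0 := (hW (x, y)).const_mul (2 * C)
    simpa using h0
  have h0 : |f x - f y| ≤ 0 := by
    refine ge_of_tendsto hlim ?_
    filter_upwards [Filter.eventually_ge_atTop (0:ℝ)] with t ht
    exact hbound t ht
  have := abs_nonneg (f x - f y)
  have hfe : f x - f y = 0 := by
    have : |f x - f y| = 0 := le_antisymm h0 (abs_nonneg _)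
    exact abs_eq_zero.1 this
  linarith

end OllivierGraph
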